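/- For an odd integer n > 2, the absolute value of the quadratic Gauss sum Σ_{j=0}^{n−1} e^{(2πi/n)·j²} equals √n. -/

import Mathlib

open Complex Real

theorem abs_gauss_sum (n : ℕ) (hodd : Odd n) (hn : 2 < n) :
    ‖∑ j ∈ Finset.range n,
      Complex.exp (2 * Real.pi * Complex.I * ((j : ℂ) ^ 2) / n)‖ = Real.sqrt n := by
  haveI : NeZero n := ⟨by omega⟩
  set ψ : AddChar (ZMod n) ℂ := ZMod.stdAddChar with hψdef
  have hψ : ψ.IsPrimitive := ZMod.isPrimitive_stdAddChar n
  -- rewrite the sum as a sum over ZMod n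
  have key : ∑ j ∈ Finset.range n, Complex.exp (2 * Real.pi * Complex.I * ((j : ℂ) ^ 2) / n)
      = ∑ x : ZMod n, ψ (x ^ 2) := by
    refine Finset.sum_nbij' (fun j => (j : ZMod n)) (fun x => x.val) ?_ ?_ ?_ ?_ ?_
    · intro j hj; exact Finset.mem_univ _
    · intro x _; exact Finset.mem_range.mpr (ZMod.val_lt x)
    · intro j hj; exact ZMod.val_cast_of_lt (Finset.mem_range.mp hj)
    · intro x _; exact ZMod.natCast_zmod_val x
    · intro j hj
      have h1 : ((j : ZMod n)) ^ 2 = (((j ^ 2 : ℕ) : ℤ) : ZMod n) := by push_cast; ring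
      rw [h1, hψdef, ZMod.stdAddChar_coe]
      push_cast
      ring_nf
  rw [key]
  set S : ℂ := ∑ x : ZMod n, ψ (x ^ 2) with hS
  -- conjugate
  have habs1 : ∀ a : ZMod n, ‖ψ a‖ = 1 := by
    intro a
    rw [hψdef, ZMod.stdAddChar_apply]
    exact Circle.norm_coe _
  have hconj : ∀ a : ZMod n, (starRingEnd ℂ) (ψ a) = ψ (-a) := by
    intro a
    rw [AddChar.map_neg_eq_inv, Complex.inv_eq_conj (habs1 a)]
  have hcS : (starRingEnd ℂ) S = ∑ y : ZMod n, ψ (-(y ^ 2)) := by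
    rw [hS, map_sum]
    exact Finset.sum_congr rfl fun y _ => hconj _
  -- key computation : S * conj S = n
  have hmul : S * (starRingEnd ℂ) S = (n : ℂ) := by
    rw [hcS, hS, Finset.sum_mul_sum, Finset.sum_comm]
    have step1 : ∀ y : ZMod n, ∑ x : ZMod n, ψ (x ^ 2) * ψ (-(y ^ 2))
        = ∑ d : ZMod n, ψ (d ^ 2) * ψ (y * (2 * d)) := by
      intro y
      rw [← Fintype.sum_bijective (fun d : ZMod n => y + d)
        (AddGroup.addLeft_bijective y) _ _ (fun d => rfl)]
      refine Finset.sum_congr rfl fun d _ => ?_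
      rw [← AddChar.map_add_eq_mul, ← AddChar.map_add_eq_mul]
      congr 1
      ring
    rw [Finset.sum_congr rfl fun y _ => step1 y, Finset.sum_comm]
    have step2 : ∀ d : ZMod n, ∑ y : ZMod n, ψ (d ^ 2) * ψ (y * (2 * d))
        = ψ (d ^ 2) * (if 2 * d = 0 then (n : ℂ) else 0) := by
      intro d
      rw [← Finset.mul_sum]
      congr 1
      classical
      rw [AddChar.sum_mulShift (2 * d) hψ]
      simp [ZMod.card]
    rw [Finset.sum_congr rfl fun d _ => step2 d]
    have h2 : IsUnit (2 : ZMod n) := by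
      have hco : Nat.Coprime 2 n := hodd.coprime_two_left
      exact (ZMod.isUnit_iff_coprime 2 n).mpr (by simpa using hco)
    have hzero : ∀ d : ZMod n, 2 * d = 0 ↔ d = 0 := fun d => h2.mul_right_eq_zero
    calc ∑ d : ZMod n, ψ (d ^ 2) * (if 2 * d = 0 then (n : ℂ) else 0)
        = ∑ d : ZMod n, (if d = 0 then ψ (d ^ 2) * n else 0) := by
          refine Finset.sum_congr rfl fun d _ => ?_
          by_cases h : d = 0 <;> simp [h, hzero d]
      _ = ψ (0 ^ 2) * n := by rw [Finset.sum_ite_eq' _ _ (fun d => ψ (d ^ 2) * n)]; simp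
      _ = (n : ℂ) := by simp
  -- conclude
  have hnormSq : Complex.normSq S = (n : ℝ) := by
    have := hmul
    rw [Complex.mul_conj] at this
    exact_mod_cast this
  rw [Complex.norm_def, hnormSq]
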